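/- Let K be a field and f(X,Y) = a_0(X) + a_1(X)Y + ... + a_m(X)Y^m with a_0, ..., a_m ∈ K[X] and a_0·a_m ≠ 0. If d is a divisor of a_m in K[X] such that deg a_m > m·deg d + H_1(f), then f(X,Y), viewed as a polynomial in Y over K(X), has at most Ω(a_m/d) irreducible factors over K(X), counted with multiplicity. -/

import Mathlib

open Polynomial

/-- Ω(p): number of irreducible factors of `p`, counted with multiplicity. -/
noncomputable def Omega {R : Type*} [CommMonoidWithZero R] [IsCancelMulZero R]
    [UniqueFactorizationMonoid R] (p : R) : ℕ :=
  Multiset.card (UniqueFactorizationMonoid.factors p)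

/-- H₁(f) for f = a₀ + a₁Y + ⋯ + aₘYᵐ : the max of the degrees of a₀,…,a_{m-1}. -/
noncomputable def H1 {K : Type*} [Field K] (a : ℕ → Polynomial K) (m : ℕ) : ℕ :=
  (Finset.range m).sup fun i => (a i).natDegree

section OmegaLemmas

variable {R : Type*} [CommMonoidWithZero R] [IsCancelMulZero R] [UniqueFactorizationMonoid R]

lemma Omega_mul {x y : R} (hx : x ≠ 0) (hy : y ≠ 0) :
    Omega (x * y) = Omega x + Omega y := by
  have h := UniqueFactorizationMonoid.factors_mul hx hy
  have h2 := Multiset.card_eq_card_of_rel h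
  simpa [Omega] using h2

lemma Omega_isUnit {u : R} (hu : IsUnit u) : Omega u = 0 := by
  rcases subsingleton_or_nontrivial R with hR | hR
  · have : u = 0 := Subsingleton.elim _ _
    simp [Omega, this]
  obtain ⟨v, hv⟩ := hu.exists_right_inv
  have hu0 : u ≠ 0 := left_ne_zero_of_mul_eq_one hv
  have hv0 : v ≠ 0 := right_ne_zero_of_mul_eq_one hv
  have h := Omega_mul hu0 hv0
  rw [hv] at h
  have h1 : Omega (1 : R) = 0 := by
    simp [Omega, UniqueFactorizationMonoid.factors_one]
  omega

lemma Omega_dvd {x y : R} (h : x ∣ y) (hy : y ≠ 0) : Omega x ≤ Omega y := by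
  obtain ⟨c, rfl⟩ := h
  rcases mul_ne_zero_iff.mp hy with ⟨hx, hc⟩
  rw [Omega_mul hx hc]
  omega

lemma Omega_pos {p : R} (h0 : p ≠ 0) (hu : ¬IsUnit p) : 1 ≤ Omega p := by
  obtain ⟨q, hq⟩ := UniqueFactorizationMonoid.exists_mem_factors h0 hu
  have h : 0 < Multiset.card (UniqueFactorizationMonoid.factors p) :=
    Multiset.card_pos_iff_exists_mem.mpr ⟨q, hq⟩
  exact h

lemma Omega_irreducible {p : R} (hp : Irreducible p) : Omega p = 1 := by
  obtain ⟨q, _, hfq⟩ := prime_factors_irreducible hp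
    ⟨fun b hb => UniqueFactorizationMonoid.prime_of_factor b hb,
      UniqueFactorizationMonoid.factors_prod hp.ne_zero⟩
  simp [Omega, hfq]

end OmegaLemmas

section GoodSection

variable {K : Type*} [Field K]

/-- The "twisted degree" of the `i`-th coefficient of `P ∈ K[X][Y]`. -/
noncomputable def dd (s : ℕ) (P : Polynomial (Polynomial K)) (i : ℕ) : WithBot ℕ :=
  (P.coeff i).degree + (((P.natDegree - i) * s : ℕ) : WithBot ℕ)

/-- `Good s P` : the twisted degree is uniquely maximized at the top coefficient. -/
def Good (s : ℕ) (P : Polynomial (Polynomial K)) : Prop :=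
  ∀ i < P.natDegree, dd s P i < dd s P P.natDegree

lemma dd_natDegree (s : ℕ) (P : Polynomial (Polynomial K)) :
    dd s P P.natDegree = P.leadingCoeff.degree := by
  rw [dd, Nat.sub_self, Nat.zero_mul, Polynomial.leadingCoeff, Nat.cast_zero, add_zero]

lemma dd_eq_bot_iff {s : ℕ} {P : Polynomial (Polynomial K)} {i : ℕ} :
    dd s P i = ⊥ ↔ P.coeff i = 0 := by
  rw [dd, WithBot.add_eq_bot]
  constructor
  · rintro (h | h)
    · exact Polynomial.degree_eq_bot.mp h
    · exact absurd h WithBot.coe_ne_bot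
  · intro h
    exact Or.inl (by rw [h]; exact Polynomial.degree_zero)

lemma dd_add_dd {s : ℕ} {P Q : Polynomial (Polynomial K)} {i j : ℕ}
    (hi : i ≤ P.natDegree) (hj : j ≤ Q.natDegree) :
    dd s P i + dd s Q j
      = (P.coeff i * Q.coeff j).degree
        + (((P.natDegree + Q.natDegree - (i + j)) * s : ℕ) : WithBot ℕ) := by
  have harith : (P.natDegree - i) * s + (Q.natDegree - j) * s
      = (P.natDegree + Q.natDegree - (i + j)) * s := by
    rw [← Nat.add_mul]
    congr 1
    omega
  rw [dd, dd, Polynomial.degree_mul, ← harith, Nat.cast_add]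
  abel

lemma good_of_mul_left {s : ℕ} {P Q : Polynomial (Polynomial K)}
    (hP : P ≠ 0) (hQ : Q ≠ 0) (hG : Good s (P * Q)) : Good s P := by
  classical
  by_contra hc
  rw [Good] at hc
  push_neg at hc
  obtain ⟨i0, hi0, hi0'⟩ := hc
  set vP := P.support.sup (dd s P) with hvPdef
  set vQ := Q.support.sup (dd s Q) with hvQdef
  have hlP : P.coeff P.natDegree ≠ 0 := by
    rwa [← Polynomial.leadingCoeff, Polynomial.leadingCoeff_ne_zero]
  have hlQ : Q.coeff Q.natDegree ≠ 0 := by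
    rwa [← Polynomial.leadingCoeff, Polynomial.leadingCoeff_ne_zero]
  have hleP : ∀ i, dd s P i ≤ vP := by
    intro i
    by_cases h : P.coeff i = 0
    · rw [dd_eq_bot_iff.mpr h]; exact bot_le
    · exact Finset.le_sup (Polynomial.mem_support_iff.mpr h)
  have hleQ : ∀ i, dd s Q i ≤ vQ := by
    intro i
    by_cases h : Q.coeff i = 0
    · rw [dd_eq_bot_iff.mpr h]; exact bot_le
    · exact Finset.le_sup (Polynomial.mem_support_iff.mpr h)
  have hvPb : dd s P P.natDegree ≤ vP := hleP _
  have hvQb : dd s Q Q.natDegree ≤ vQ := hleQ _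
  have hvP_ne : vP ≠ ⊥ := by
    intro h
    exact hlP (dd_eq_bot_iff.mp (le_bot_iff.mp (h ▸ hvPb)))
  have hvQ_ne : vQ ≠ ⊥ := by
    intro h
    exact hlQ (dd_eq_bot_iff.mp (le_bot_iff.mp (h ▸ hvQb)))
  have hexP : ∃ i, dd s P i = vP := by
    obtain ⟨b, _, hbeq⟩ := Finset.exists_mem_eq_sup P.support
      ⟨_, Polynomial.natDegree_mem_support_of_nonzero hP⟩ (dd s P)
    exact ⟨b, hbeq.symm⟩
  have hexQ : ∃ i, dd s Q i = vQ := by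
    obtain ⟨b, _, hbeq⟩ := Finset.exists_mem_eq_sup Q.support
      ⟨_, Polynomial.natDegree_mem_support_of_nonzero hQ⟩ (dd s Q)
    exact ⟨b, hbeq.symm⟩
  set jP := Nat.find hexP with hjPdef
  set jQ := Nat.find hexQ with hjQdef
  have hjP : dd s P jP = vP := Nat.find_spec hexP
  have hjQ : dd s Q jQ = vQ := Nat.find_spec hexQ
  have hjPmin : ∀ i < jP, dd s P i ≠ vP := fun i h => Nat.find_min hexP h
  have hjQmin : ∀ i < jQ, dd s Q i ≠ vQ := fun i h => Nat.find_min hexQ h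
  have hjPc : P.coeff jP ≠ 0 := by
    intro h
    exact hvP_ne (by rw [← hjP]; exact dd_eq_bot_iff.mpr h)
  have hjQc : Q.coeff jQ ≠ 0 := by
    intro h
    exact hvQ_ne (by rw [← hjQ]; exact dd_eq_bot_iff.mpr h)
  have hjPle : jP ≤ P.natDegree := Polynomial.le_natDegree_of_ne_zero hjPc
  have hjQle : jQ ≤ Q.natDegree := Polynomial.le_natDegree_of_ne_zero hjQc
  have hjPlt : jP < P.natDegree := by
    rcases lt_or_eq_of_le hjPle with h | h
    · exact h
    · exfalso
      have hv : vP ≤ dd s P i0 := by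
        rw [← hjP, h]
        exact hi0'
      have h1 : dd s P i0 = vP := le_antisymm (hleP i0) hv
      exact hjPmin i0 (by omega) h1
  have hNpq : (P * Q).natDegree = P.natDegree + Q.natDegree :=
    Polynomial.natDegree_mul hP hQ
  have hk0 : jP + jQ < (P * Q).natDegree := by omega
  have hTne : P.coeff jP * Q.coeff jQ ≠ 0 := mul_ne_zero hjPc hjQc
  have hdom : ∀ x ∈ (Finset.HasAntidiagonal.antidiagonal (jP + jQ)).erase (jP, jQ),
      (P.coeff x.1 * Q.coeff x.2).degree < (P.coeff jP * Q.coeff jQ).degree := by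
    rintro ⟨i, j⟩ hx
    have hne : (i, j) ≠ (jP, jQ) := Finset.ne_of_mem_erase hx
    have hij : i + j = jP + jQ := Finset.HasAntidiagonal.mem_antidiagonal.mp (Finset.mem_of_mem_erase hx)
    by_cases hpi : P.coeff i = 0
    · rw [hpi, zero_mul, Polynomial.degree_zero]
      exact Ne.bot_lt (by rw [Ne, Polynomial.degree_eq_bot]; exact hTne)
    by_cases hqj : Q.coeff j = 0
    · rw [hqj, mul_zero, Polynomial.degree_zero]
      exact Ne.bot_lt (by rw [Ne, Polynomial.degree_eq_bot]; exact hTne)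
    have hiN : i ≤ P.natDegree := Polynomial.le_natDegree_of_ne_zero hpi
    have hjN : j ≤ Q.natDegree := Polynomial.le_natDegree_of_ne_zero hqj
    have hij' : i ≠ jP := by
      rintro rfl
      exact hne (by rw [Prod.mk.injEq]; exact ⟨rfl, by omega⟩)
    have hlt : dd s P i + dd s Q j < dd s P jP + dd s Q jQ := by
      rcases lt_or_gt_of_ne hij' with h | h
      · have h1 : dd s P i < vP := lt_of_le_of_ne (hleP i) (hjPmin i h)
        have h2 : dd s Q j ≤ vQ := hleQ j
        rw [hjP, hjQ]
        exact WithBot.add_lt_add_of_lt_of_le (fun hb => hqj (dd_eq_bot_iff.mp hb)) h1 h2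
      · have hj' : j < jQ := by omega
        have h1 : dd s P i ≤ vP := hleP i
        have h2 : dd s Q j < vQ := lt_of_le_of_ne (hleQ j) (hjQmin j hj')
        rw [hjP, hjQ]
        exact WithBot.add_lt_add_of_le_of_lt (fun hb => hpi (dd_eq_bot_iff.mp hb)) h1 h2
    rw [dd_add_dd hiN hjN, dd_add_dd hjPle hjQle, hij] at hlt
    exact (WithBot.add_lt_add_iff_right (WithBot.coe_ne_bot)).mp hlt
  have hco : ((P * Q).coeff (jP + jQ)).degree = (P.coeff jP * Q.coeff jQ).degree := by
    rw [Polynomial.coeff_mul]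
    have hmem : ((jP, jQ) : ℕ × ℕ) ∈ Finset.HasAntidiagonal.antidiagonal (jP + jQ) :=
      Finset.HasAntidiagonal.mem_antidiagonal.mpr rfl
    rw [← Finset.add_sum_erase _ _ hmem]
    refine Polynomial.degree_add_eq_left_of_degree_lt ?_
    refine lt_of_le_of_lt (Polynomial.degree_sum_le _ _) ?_
    rw [Finset.sup_lt_iff (Ne.bot_lt (by rw [Ne, Polynomial.degree_eq_bot]; exact hTne))]
    exact hdom
  have hG1 := hG (jP + jQ) hk0
  have hub : dd s (P * Q) ((P * Q).natDegree) ≤ vP + vQ := by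
    rw [dd_natDegree, Polynomial.leadingCoeff_mul, Polynomial.degree_mul]
    exact add_le_add (dd_natDegree s P ▸ hvPb) (dd_natDegree s Q ▸ hvQb)
  have heq : dd s (P * Q) (jP + jQ) = vP + vQ := by
    simp only [dd]
    rw [hNpq, hco, ← dd_add_dd hjPle hjQle, hjP, hjQ]
  rw [heq] at hG1
  exact absurd (lt_of_lt_of_le hG1 hub) (lt_irrefl _)

lemma lead_deg_of_good {s : ℕ} {G : Polynomial (Polynomial K)}
    (h1 : 1 ≤ G.natDegree) (h0 : G.coeff 0 ≠ 0) (hG : Good s G) :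
    G.natDegree * s < G.leadingCoeff.natDegree := by
  have hGne : G ≠ 0 := fun hz => h0 (by simp [hz])
  have h := hG 0 h1
  rw [dd_natDegree] at h
  have hlead : G.leadingCoeff ≠ 0 := Polynomial.leadingCoeff_ne_zero.mpr hGne
  rw [Polynomial.degree_eq_natDegree hlead] at h
  simp only [dd, Nat.sub_zero] at h
  have h2 : ((G.natDegree * s : ℕ) : WithBot ℕ)
      ≤ (G.coeff 0).degree + ((G.natDegree * s : ℕ) : WithBot ℕ) := by
    calc ((G.natDegree * s : ℕ) : WithBot ℕ)
        = 0 + ((G.natDegree * s : ℕ) : WithBot ℕ) := (zero_add _).symm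
      _ ≤ _ := add_le_add_left (Polynomial.zero_le_degree_iff.mpr h0) _
  have h3 := lt_of_le_of_lt h2 h
  exact_mod_cast h3

lemma irreducible_map_of_irreducible {G : Polynomial (Polynomial K)}
    (hG : Irreducible G) (h1 : 1 ≤ G.natDegree) :
    Irreducible (G.map (algebraMap (Polynomial K) (RatFunc K))) := by
  classical
  have hprim : G.IsPrimitive := by
    intro r hr
    obtain ⟨t, ht⟩ := hr
    rcases hG.isUnit_or_isUnit ht with h | h
    · exact Polynomial.isUnit_C.mp h
    · exfalso
      have h2 := Polynomial.natDegree_eq_zero_of_isUnit h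
      have h3 : G.natDegree ≤ (Polynomial.C r).natDegree + t.natDegree := by
        rw [ht]
        exact Polynomial.natDegree_mul_le
      rw [Polynomial.natDegree_C] at h3
      omega
  exact (hprim.irreducible_iff_irreducible_map_fraction_map).mp hG

lemma main_ind (s : ℕ) :
    ∀ n : ℕ, ∀ g : Polynomial (Polynomial K), g.natDegree ≤ n → g.coeff 0 ≠ 0 → Good s g →
    ∀ d' : Polynomial K, d' ∣ g.leadingCoeff → d'.natDegree ≤ s →
    Omega (g.map (algebraMap (Polynomial K) (RatFunc K))) + Omega d'
      ≤ Omega g.leadingCoeff := by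
  classical
  intro n
  induction n with
  | zero =>
    intro g hdeg h0 _ d' hd' hds
    have hg0 : g ≠ 0 := fun h => h0 (by simp [h])
    have hdeg0 : g.natDegree = 0 := Nat.le_zero.mp hdeg
    have hunit : IsUnit (g.map (algebraMap (Polynomial K) (RatFunc K))) := by
      have hgC : g = Polynomial.C (g.coeff 0) := Polynomial.eq_C_of_natDegree_eq_zero hdeg0
      rw [hgC, Polynomial.map_C]
      refine Polynomial.isUnit_C.mpr (isUnit_iff_ne_zero.mpr ?_)
      exact fun h => h0 ((map_eq_zero_iff _ (IsFractionRing.injective _ _)).mp h)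
    rw [Omega_isUnit hunit, zero_add]
    have hlc : g.leadingCoeff = g.coeff 0 := by
      rw [Polynomial.leadingCoeff, hdeg0]
    exact Omega_dvd hd' (hlc ▸ h0)
  | succ n ih =>
    intro g hdeg h0 hGood d' hd' hds
    rcases Nat.lt_or_ge g.natDegree (n + 1) with h | h
    · exact ih g (by omega) h0 hGood d' hd' hds
    have hn1 : g.natDegree = n + 1 := le_antisymm hdeg h
    have hg0 : g ≠ 0 := fun hz => h0 (by simp [hz])
    have hppne : g.primPart ≠ 0 := g.isPrimitive_primPart.ne_zero
    have hppu : ¬IsUnit g.primPart := by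
      intro hu
      have h2 := Polynomial.natDegree_eq_zero_of_isUnit hu
      rw [Polynomial.natDegree_primPart] at h2
      omega
    obtain ⟨G, hGirr, hGdvd'⟩ := WfDvdMonoid.exists_irreducible_factor hppu hppne
    have hGdvd : G ∣ g := hGdvd'.trans
      (Dvd.intro_left _ g.eq_C_content_mul_primPart.symm)
    have hGdeg : 1 ≤ G.natDegree := by
      by_contra hcon
      have h00 : G.natDegree = 0 := by omega
      have hCu : IsUnit G := by
        rw [Polynomial.eq_C_of_natDegree_eq_zero h00] at hGdvd' ⊢
        exact Polynomial.isUnit_C.mpr (g.isPrimitive_primPart _ hGdvd')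
      exact hGirr.not_isUnit hCu
    obtain ⟨h', hgh⟩ := hGdvd
    have hGne : G ≠ 0 := hGirr.ne_zero
    have hhne : h' ≠ 0 := by
      rintro rfl
      rw [mul_zero] at hgh
      exact hg0 hgh
    have hcz : g.coeff 0 = G.coeff 0 * h'.coeff 0 := by
      rw [hgh, Polynomial.mul_coeff_zero]
    have hh0 : h'.coeff 0 ≠ 0 := fun hz => h0 (by rw [hcz, hz, mul_zero])
    have hG0 : G.coeff 0 ≠ 0 := fun hz => h0 (by rw [hcz, hz, zero_mul])
    have hGoodgh : Good s (G * h') := hgh ▸ hGood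
    have hGoodG : Good s G := good_of_mul_left hGne hhne hGoodgh
    have hGoodh : Good s h' := by
      refine good_of_mul_left hhne hGne ?_
      rw [mul_comm]
      exact hGoodgh
    have hdegh : h'.natDegree ≤ n := by
      have hmul := Polynomial.natDegree_mul hGne hhne
      rw [← hgh] at hmul
      omega
    have hlcg : g.leadingCoeff = G.leadingCoeff * h'.leadingCoeff := by
      rw [hgh, Polynomial.leadingCoeff_mul]
    have hlcne : g.leadingCoeff ≠ 0 := Polynomial.leadingCoeff_ne_zero.mpr hg0
    have hGlne : G.leadingCoeff ≠ 0 := Polynomial.leadingCoeff_ne_zero.mpr hGne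
    have hhlne : h'.leadingCoeff ≠ 0 := Polynomial.leadingCoeff_ne_zero.mpr hhne
    have hd'ne : d' ≠ 0 := by
      rintro rfl
      exact hlcne (zero_dvd_iff.mp hd')
    obtain ⟨d1, d2, hd1, hd2, hd12⟩ :=
      exists_dvd_and_dvd_of_dvd_mul (hlcg ▸ hd' : d' ∣ G.leadingCoeff * h'.leadingCoeff)
    have hd1ne : d1 ≠ 0 := by
      rintro rfl
      rw [zero_mul] at hd12
      exact hd'ne hd12
    have hd2ne : d2 ≠ 0 := by
      rintro rfl
      rw [mul_zero] at hd12
      exact hd'ne hd12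
    have hd1d' : d1 ∣ d' := ⟨d2, hd12⟩
    have hd2d' : d2 ∣ d' := ⟨d1, by rw [hd12, mul_comm]⟩
    have hd1s : d1.natDegree ≤ s :=
      le_trans (Polynomial.natDegree_le_of_dvd hd1d' hd'ne) hds
    have hd2s : d2.natDegree ≤ s :=
      le_trans (Polynomial.natDegree_le_of_dvd hd2d' hd'ne) hds
    have hGm_ne : G.map (algebraMap (Polynomial K) (RatFunc K)) ≠ 0 :=
      (Polynomial.map_ne_zero_iff (IsFractionRing.injective _ _)).mpr hGne
    have hhm_ne : h'.map (algebraMap (Polynomial K) (RatFunc K)) ≠ 0 :=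
      (Polynomial.map_ne_zero_iff (IsFractionRing.injective _ _)).mpr hhne
    have hmap : g.map (algebraMap (Polynomial K) (RatFunc K))
        = G.map (algebraMap (Polynomial K) (RatFunc K))
          * h'.map (algebraMap (Polynomial K) (RatFunc K)) := by
      rw [hgh, Polynomial.map_mul]
    rw [hmap, Omega_mul hGm_ne hhm_ne,
      Omega_irreducible (irreducible_map_of_irreducible hGirr hGdeg),
      hlcg, Omega_mul hGlne hhlne, hd12, Omega_mul hd1ne hd2ne]
    have IH := ih h' hdegh hh0 hGoodh d2 hd2 hd2s
    -- Omega d1 + 1 ≤ Omega G.leadingCoeff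
    obtain ⟨e, he⟩ := hd1
    have hene : e ≠ 0 := by
      rintro rfl
      rw [mul_zero] at he
      exact hGlne he
    have hkey := lead_deg_of_good hGdeg hG0 hGoodG
    have hs_le : s ≤ G.natDegree * s := Nat.le_mul_of_pos_left s hGdeg
    have hnd : G.leadingCoeff.natDegree = d1.natDegree + e.natDegree := by
      rw [he, Polynomial.natDegree_mul hd1ne hene]
    have hnotu : ¬IsUnit e := by
      intro hu
      have h2 := Polynomial.natDegree_eq_zero_of_isUnit hu
      omega
    have hOG : Omega d1 + 1 ≤ Omega G.leadingCoeff := by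
      rw [he, Omega_mul hd1ne hene]
      exact add_le_add le_rfl (Omega_pos hene hnotu)
    omega

end GoodSection

theorem stmt2 {K : Type*} [Field K] (m : ℕ) (hm : 0 < m)
    (a : ℕ → Polynomial K) (d : Polynomial K)
    (ha0 : a 0 ≠ 0) (ham : a m ≠ 0) (hd : d ∣ a m)
    (f : Polynomial (Polynomial K))
    (hf : f = ∑ i ∈ Finset.range (m + 1), Polynomial.C (a i) * Polynomial.X ^ i)
    (hdeg : (a m).natDegree > m * d.natDegree + H1 a m) :
    Omega (f.map (algebraMap (Polynomial K) (RatFunc K))) ≤ Omega (a m / d) := by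
  classical
  set s := d.natDegree with hs
  have hdne : d ≠ 0 := by
    rintro rfl
    exact ham (zero_dvd_iff.mp hd)
  have hcoeff : ∀ k, f.coeff k = if k < m + 1 then a k else 0 := by
    intro k
    rw [hf, Polynomial.finset_sum_coeff]
    simp only [Polynomial.coeff_C_mul, Polynomial.coeff_X_pow, mul_ite, mul_one, mul_zero]
    rw [Finset.sum_ite_eq (Finset.range (m + 1)) k (fun i => a i)]
    simp [Finset.mem_range]
  have hfm : f.coeff m = a m := by
    rw [hcoeff]
    simp
  have hfne : f ≠ 0 := fun hz => ham (by rw [← hfm, hz, Polynomial.coeff_zero])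
  have hndeg : f.natDegree = m := by
    apply le_antisymm
    · refine Polynomial.natDegree_le_iff_coeff_eq_zero.mpr ?_
      intro N hN
      rw [hcoeff]
      simp [show ¬(N < m + 1) by omega]
    · exact Polynomial.le_natDegree_of_ne_zero (by rw [hfm]; exact ham)
  have hlead : f.leadingCoeff = a m := by
    rw [Polynomial.leadingCoeff, hndeg, hfm]
  have hf0 : f.coeff 0 ≠ 0 := by
    rw [hcoeff]
    simpa using ha0
  have hGood : Good s f := by
    intro i hi
    rw [hndeg] at hi
    rw [dd_natDegree, hlead]
    have hia : f.coeff i = a i := by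
      rw [hcoeff]
      simp [show i < m + 1 by omega]
    simp only [dd, hia, hndeg]
    by_cases hz : a i = 0
    · rw [hz, Polynomial.degree_zero, WithBot.bot_add]
      exact Ne.bot_lt (by rw [Ne, Polynomial.degree_eq_bot]; exact ham)
    · rw [Polynomial.degree_eq_natDegree hz, Polynomial.degree_eq_natDegree ham]
      have hH : (a i).natDegree ≤ H1 a m := by
        unfold H1
        exact Finset.le_sup (f := fun i => (a i).natDegree) (Finset.mem_range.mpr hi)
      have hms : (m - i) * s ≤ m * s := Nat.mul_le_mul_right s (Nat.sub_le m i)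
      have hfin : (a i).natDegree + (m - i) * s < (a m).natDegree := by
        linarith [hdeg]
      exact_mod_cast hfin
  have hmain := main_ind s f.natDegree f le_rfl hf0 hGood d
    (by rw [hlead]; exact hd) le_rfl
  rw [hlead] at hmain
  have key : a m = d * (a m / d) := (EuclideanDomain.mul_div_cancel' hdne hd).symm
  have hquot_ne : a m / d ≠ 0 := by
    intro hz
    rw [hz, mul_zero] at key
    exact ham key
  have hsplit : Omega (a m) = Omega d + Omega (a m / d) := by
    conv_lhs => rw [key]
    exact Omega_mul hdne hquot_ne
  omega
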